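/- arXiv:2103.15806 — 5 statements merged into one kernel-verified Lean document; each statement's English description precedes it below -/
import Mathlib

section
/- Let k be a field and 𝔤 a finite-dimensional Lie algebra over k whose Killing form κ is nondegenerate. Let 𝔲 ⊆ 𝔤 be a Lie subalgebra and set 𝔥 := N_𝔤(𝔲). Assume that (i) 𝔲 is exactly the set of ad-nilpotent elements of the solvable radical rad(𝔥), and (ii) the orthogonal 𝔲^⊥ of 𝔲 with respect to κ is a Lie subalgebra of 𝔤. Then 𝔥 = 𝔲^⊥ and 𝔲 = 𝔥^⊥; that is, 𝔲 is the orthogonal of its normalizer for the Killing form of 𝔤. -/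
open LieAlgebra LieModule

/-- If every element of a Lie subalgebra `u` is ad-nilpotent, then the Killing form vanishes
on pairs `(x, y)` with `x` in the normalizer of `u` and `y ∈ u`. -/
lemma killingForm_eq_zero_of_mem_normalizer
    {k L : Type*} [Field k] [LieRing L] [LieAlgebra k L] [FiniteDimensional k L]
    (u : LieSubalgebra k L)
    (hnil : ∀ z ∈ u, IsNilpotent (LieAlgebra.ad k L z))
    {x y : L} (hx : x ∈ u.normalizer) (hy : y ∈ u) :
    killingForm k L x y = 0 := by
  -- `L` is a nilpotent `u`-module by Engel's theorem.
  have hEng : LieModule.IsNilpotent u L := by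
    rw [LieModule.isNilpotent_iff_forall' (R := k) (L := u) (M := L)]
    rintro ⟨z, hz⟩
    obtain ⟨n, hn⟩ := hnil z hz
    have hz' : (LieModule.toEnd k u L ⟨z, hz⟩ : Module.End k L) = LieAlgebra.ad k L z := by
      ext v; rfl
    exact ⟨n, by rw [hz', hn]⟩
  obtain ⟨n, hn⟩ := (LieModule.isNilpotent_iff (R := k) (L := u) (M := L)).mp hEng
  set D : ℕ → LieSubmodule k (↥u) L := LieModule.lowerCentralSeries k (↥u) L with hD
  -- `ad x` preserves each term of the lower central series.
  have hadx : ∀ i, ∀ v ∈ D i, ⁅x, v⁆ ∈ D i := by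
    intro i
    induction i with
    | zero => intro v _; exact LieSubmodule.mem_top _
    | succ i ih =>
      intro v hv
      have hv' : v ∈ (↑(D (i+1)) : Submodule k L) := hv
      rw [hD, LieModule.lowerCentralSeries_succ] at hv' ⊢
      rw [LieSubmodule.lieIdeal_oper_eq_linear_span'] at hv'
      rw [← LieSubmodule.mem_toSubmodule, LieSubmodule.lieIdeal_oper_eq_linear_span']
      clear hv
      induction hv' using Submodule.span_induction with
      | mem w hw =>
        obtain ⟨a, -, m, hm, rfl⟩ := hw
        have hleib : ⁅x, ⁅(a : L), m⁆⁆ = ⁅⁅x, (a : L)⁆, m⁆ + ⁅(a : L), ⁅x, m⁆⁆ := by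
          rw [leibniz_lie]
        have h1 : ⁅⁅x, (a : L)⁆, m⁆ ∈ Submodule.span k
            { m' : L | ∃ b ∈ (⊤ : LieIdeal k u), ∃ n' ∈ D i, ⁅b, n'⁆ = m' } := by
          apply Submodule.subset_span
          exact ⟨⟨⁅x, (a : L)⁆, (LieSubalgebra.mem_normalizer_iff u x).mp hx _ a.2⟩,
            trivial, m, hm, rfl⟩
        have h2 : ⁅(a : L), ⁅x, m⁆⁆ ∈ Submodule.span k
            { m' : L | ∃ b ∈ (⊤ : LieIdeal k u), ∃ n' ∈ D i, ⁅b, n'⁆ = m' } := by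
          apply Submodule.subset_span
          exact ⟨a, trivial, ⁅x, m⁆, ih _ hm, rfl⟩
        have : (⁅x, ⁅(a : L), m⁆⁆ : L) = ⁅x, ⁅a, m⁆⁆ := rfl
        rw [← this] at *
        rw [hleib]
        exact Submodule.add_mem _ h1 h2
      | zero => simp only [lie_zero]; exact Submodule.zero_mem _
      | add w₁ w₂ _ _ ih1 ih2 => rw [lie_add]; exact Submodule.add_mem _ ih1 ih2
      | smul t w _ ihw => rw [lie_smul]; exact Submodule.smul_mem _ t ihw
  -- `ad y` maps each term into the next.
  have hady : ∀ i, ∀ v ∈ D i, ⁅y, v⁆ ∈ D (i+1) := by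
    intro i v hv
    rw [hD, LieModule.lowerCentralSeries_succ, ← LieSubmodule.mem_toSubmodule,
      LieSubmodule.lieIdeal_oper_eq_linear_span']
    exact Submodule.subset_span ⟨⟨y, hy⟩, trivial, v, hv, rfl⟩
  -- hence `ad x ∘ ad y` is nilpotent.
  set f : Module.End k L := LieAlgebra.ad k L x ∘ₗ LieAlgebra.ad k L y with hf
  have hfpow : ∀ i, ∀ v : L, (f ^ i) v ∈ D i := by
    intro i
    induction i with
    | zero => intro v; exact LieSubmodule.mem_top _
    | succ i ih =>
      intro v
      have h1 : (f ^ (i+1)) v = ⁅x, ⁅y, (f ^ i) v⁆⁆ := by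
        rw [pow_succ', Module.End.mul_apply]; rfl
      rw [h1]
      exact hadx (i+1) _ (hady i _ (ih v))
  have hfnil : IsNilpotent f := by
    refine ⟨n, ?_⟩
    ext v
    have := hfpow n v
    rw [hn] at this
    simpa using this
  have := LinearMap.isNilpotent_trace_of_isNilpotent hfnil
  rw [killingForm_apply_apply]
  exact this.eq_zero

/-- Let `k` be a field and `𝔤` a finite-dimensional Lie algebra over `k` whose
Killing form `κ` is nondegenerate.  Let `𝔲 ⊆ 𝔤` be a Lie subalgebra and `𝔥 := N_𝔤(𝔲)` its
normalizer.  Assume that (i) `𝔲` is exactly the set of ad-nilpotent elements of the solvable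
radical `rad(𝔥)` and (ii) the orthogonal `𝔲^⊥` of `𝔲` for `κ` is a Lie subalgebra of `𝔤`
(i.e. closed under the bracket).  Then `𝔥 = 𝔲^⊥` and `𝔲 = 𝔥^⊥`. -/
theorem normalizer_eq_orthogonal_and_orthogonal_of_normalizer
    {k L : Type*} [Field k] [LieRing L] [LieAlgebra k L] [FiniteDimensional k L]
    (hnd : (killingForm k L).Nondegenerate)
    (u : LieSubalgebra k L)
    (hu : ∀ x : L, x ∈ u ↔ ∃ hx : x ∈ u.normalizer,
      (⟨x, hx⟩ : u.normalizer) ∈ LieAlgebra.radical k u.normalizer ∧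
        IsNilpotent (LieAlgebra.ad k L x))
    (hperp : ∀ x y : L, (∀ z ∈ u, killingForm k L x z = 0) →
      (∀ z ∈ u, killingForm k L y z = 0) →
      ∀ z ∈ u, killingForm k L ⁅x, y⁆ z = 0) :
    (∀ x : L, x ∈ u.normalizer ↔ ∀ y ∈ u, killingForm k L x y = 0) ∧
    (∀ x : L, x ∈ u ↔ ∀ y ∈ u.normalizer, killingForm k L x y = 0) := by
  classical
  set B : LinearMap.BilinForm k L := killingForm k L with hB
  have hsymm : ∀ a b : L, B a b = B b a := fun a b => LieModule.traceForm_comm k L L a b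
  have hrefl : B.IsRefl := fun a b h => by rw [hsymm]; exact h
  have hnil : ∀ z ∈ u, IsNilpotent (LieAlgebra.ad k L z) := by
    intro z hz
    obtain ⟨_, _, h⟩ := (hu z).mp hz
    exact h
  -- The normalizer is contained in the orthogonal of `u`.
  have hA : ∀ x ∈ u.normalizer, ∀ y ∈ u, B x y = 0 := fun x hx y hy =>
    killingForm_eq_zero_of_mem_normalizer u hnil hx hy
  set U : Submodule k L := u.toSubmodule with hU
  have hUmem : ∀ z : L, z ∈ U ↔ z ∈ u := fun z => Iff.rfl
  have hOrth : ∀ w : L, w ∈ B.orthogonal U ↔ ∀ z ∈ u, B w z = 0 := by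
    intro w
    rw [LinearMap.BilinForm.mem_orthogonal_iff]
    constructor
    · intro h z hz
      rw [hsymm]
      exact h z hz
    · intro h z hz
      rw [hsymm]
      exact h z hz
  -- The orthogonal of `u` is contained in the normalizer.
  have hBnorm : ∀ x : L, (∀ y ∈ u, B x y = 0) → x ∈ u.normalizer := by
    intro x hxp
    rw [LieSubalgebra.mem_normalizer_iff]
    intro y hy
    have hmem : ⁅x, y⁆ ∈ B.orthogonal (B.orthogonal U) := by
      intro z hz
      have hzperp : ∀ w ∈ u, B z w = 0 := (hOrth z).mp hz
      rw [hsymm]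
      have e1 : B ⁅x, y⁆ z = B x ⁅y, z⁆ := LieModule.traceForm_apply_lie_apply k L L x y z
      have e2 : B ⁅y, z⁆ x = B y ⁅z, x⁆ := LieModule.traceForm_apply_lie_apply k L L y z x
      rw [e1, hsymm, e2, hsymm]
      exact hperp z x hzperp hxp y hy
    rwa [LinearMap.BilinForm.orthogonal_orthogonal hnd hrefl] at hmem
  have h1 : ∀ x : L, x ∈ u.normalizer ↔ ∀ y ∈ u, B x y = 0 :=
    fun x => ⟨hA x, hBnorm x⟩
  refine ⟨h1, fun x => ⟨?_, ?_⟩⟩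
  · intro hx y hy
    rw [hsymm]
    exact hA y hy x hx
  · intro h
    have hmem : x ∈ B.orthogonal (B.orthogonal U) := by
      intro z hz
      rw [hsymm]
      exact h z (hBnorm z ((hOrth z).mp hz))
    rwa [LinearMap.BilinForm.orthogonal_orthogonal hnd hrefl] at hmem
end

section
/- Let 𝔤 be a finite-dimensional Lie algebra over a field k whose Killing form κ is nondegenerate. Let 𝔭 ⊆ 𝔤 be a Lie subalgebra such that the orthogonal 𝔭^⊥ with respect to κ is a Lie subalgebra of 𝔤 all of whose elements are ad-nilpotent (so in particular 𝔭^⊥ is a nilpotent subalgebra). Then N_𝔤(𝔭^⊥) = 𝔭. -/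
/-- Let `𝔤` be a finite-dimensional Lie algebra over a field `k` whose Killing
form `κ` is nondegenerate.  Let `𝔭 ⊆ 𝔤` be a Lie subalgebra such that the orthogonal `𝔭^⊥`
with respect to `κ` is a Lie subalgebra of `𝔤` (closed under the bracket) all of whose elements
are ad-nilpotent.  Then `N_𝔤(𝔭^⊥) = 𝔭`. -/
theorem normalizer_of_orthogonal_eq_self
    {k L : Type*} [Field k] [LieRing L] [LieAlgebra k L] [FiniteDimensional k L]
    (hnd : (killingForm k L).Nondegenerate)
    (p : LieSubalgebra k L)
    (hperp_sub : ∀ x y : L, (∀ z ∈ p, killingForm k L x z = 0) →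
      (∀ z ∈ p, killingForm k L y z = 0) →
      ∀ z ∈ p, killingForm k L ⁅x, y⁆ z = 0)
    (hperp_nil : ∀ x : L, (∀ z ∈ p, killingForm k L x z = 0) →
      IsNilpotent (LieAlgebra.ad k L x)) :
    ∀ x : L, (∀ y : L, (∀ z ∈ p, killingForm k L y z = 0) →
      ∀ z ∈ p, killingForm k L ⁅x, y⁆ z = 0) ↔ x ∈ p := by
  classical
  have hsymm : ∀ a b : L, killingForm k L a b = killingForm k L b a := fun a b =>
    LieModule.traceForm_comm k L L a b
  have hrefl : (killingForm k L).IsRefl := (LieModule.traceForm_isSymm k L L).isRefl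
  -- the orthogonal complement of `p` as a Lie subalgebra
  let Q : LieSubalgebra k L :=
    { toSubmodule := (killingForm k L).orthogonal p.toSubmodule
      lie_mem' := by
        intro x y hx hy
        have hx' : ∀ z ∈ p, killingForm k L x z = 0 := fun z hz => hsymm x z ▸ hx z hz
        have hy' : ∀ z ∈ p, killingForm k L y z = 0 := fun z hz => hsymm y z ▸ hy z hz
        intro z hz
        show killingForm k L z ⁅x, y⁆ = 0
        rw [hsymm]
        exact hperp_sub x y hx' hy' z hz }
  have hQmem : ∀ x : L, x ∈ Q ↔ (∀ z ∈ p, killingForm k L x z = 0) := by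
    intro x
    constructor
    · intro h z hz; rw [hsymm]; exact h z hz
    · intro h z hz; show killingForm k L z x = 0; rw [hsymm]; exact h z hz
  -- `L` is a nilpotent module over `Q` (Engel's theorem)
  have hQnil : LieModule.IsNilpotent Q L := by
    rw [LieModule.isNilpotent_iff_forall' (R := k)]
    intro y
    have h : LieModule.toEnd k Q L y = LieAlgebra.ad k L (y : L) := by
      ext v; rfl
    rw [h]
    exact hperp_nil (y : L) ((hQmem (y : L)).mp y.2)
  obtain ⟨n, hn⟩ := LieModule.IsNilpotent.nilpotent k Q L
  intro x
  constructor
  · -- normalizer direction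
    intro hx
    have hxQ : ∀ y : L, y ∈ Q → ⁅x, y⁆ ∈ Q := by
      intro y hy
      exact (hQmem _).mpr (hx y ((hQmem y).mp hy))
    -- `ad x` preserves the lower central series of `L` over `Q`
    have hxS : ∀ i, ∀ v ∈ LieModule.lowerCentralSeries k Q L i, ⁅x, v⁆ ∈ LieModule.lowerCentralSeries k Q L i := by
      intro i
      induction i with
      | zero => intro v _; exact LieSubmodule.mem_top _
      | succ i ih =>
        intro v hv
        rw [LieModule.lowerCentralSeries_succ] at hv ⊢
        rw [← LieSubmodule.mem_toSubmodule, LieSubmodule.lieIdeal_oper_eq_linear_span'] at hv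
        refine Submodule.span_induction ?_ ?_ (fun a b _ _ ha hb => ?_) (fun t a _ ha => ?_) hv
        · rintro - ⟨z, -, w, hw, rfl⟩
          have h1 : ⁅x, ⁅(z : L), w⁆⁆ = ⁅⁅x, (z : L)⁆, w⁆ + ⁅(z : L), ⁅x, w⁆⁆ := by
            rw [leibniz_lie]
          have hz' : ⁅x, (z : L)⁆ ∈ Q := hxQ _ z.2
          have t1 : ⁅⁅x, (z : L)⁆, w⁆ ∈ ⁅(⊤ : LieIdeal k Q), LieModule.lowerCentralSeries k Q L i⁆ := by
            have : ⁅((⟨⁅x, (z : L)⁆, hz'⟩ : Q) : L), w⁆ = ⁅⁅x, (z : L)⁆, w⁆ := rfl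
            exact this ▸ LieSubmodule.lie_mem_lie (LieSubmodule.mem_top _) hw
          have t2 : ⁅(z : L), ⁅x, w⁆⁆ ∈ ⁅(⊤ : LieIdeal k Q), LieModule.lowerCentralSeries k Q L i⁆ :=
            LieSubmodule.lie_mem_lie (LieSubmodule.mem_top _) (ih w hw)
          have : (⁅x, ⁅(z : L), w⁆⁆ : L) = ⁅x, ⁅z, w⁆⁆ := rfl
          rw [← this, h1]
          exact add_mem t1 t2
        · simp
        · rw [lie_add]; exact add_mem ha hb
        · rw [lie_smul]; exact SMulMemClass.smul_mem t ha
    -- for `y ∈ Q`, `ad x ∘ ad y` is nilpotent, hence `κ x y = 0`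
    have key : ∀ y : L, y ∈ Q → killingForm k L x y = 0 := by
      intro y hy
      have hstep : ∀ i, ∀ v ∈ LieModule.lowerCentralSeries k Q L i,
          ⁅x, ⁅y, v⁆⁆ ∈ LieModule.lowerCentralSeries k Q L (i + 1) := by
        intro i v hv
        apply hxS
        rw [LieModule.lowerCentralSeries_succ]
        have : ⁅((⟨y, hy⟩ : Q) : L), v⁆ = ⁅y, v⁆ := rfl
        exact this ▸ LieSubmodule.lie_mem_lie (LieSubmodule.mem_top _) hv
      set f := LieAlgebra.ad k L x ∘ₗ LieAlgebra.ad k L y with hf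
      have hpow : ∀ i, ∀ v : L, (f ^ i) v ∈ LieModule.lowerCentralSeries k Q L i := by
        intro i
        induction i with
        | zero => intro v; exact LieSubmodule.mem_top _
        | succ i ih =>
          intro v
          rw [pow_succ', Module.End.mul_apply]
          exact hstep i _ (ih v)
      have hfnil : IsNilpotent f := by
        refine ⟨n, ?_⟩
        ext v
        have := hpow n v
        rw [hn] at this
        simpa using this
      rw [killingForm_apply_apply]
      exact (LinearMap.isNilpotent_trace_of_isNilpotent hfnil).eq_zero
    -- hence `x ∈ Q^⊥ = p`
    have hx' : x ∈ (killingForm k L).orthogonal ((killingForm k L).orthogonal p.toSubmodule) := by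
      intro y hy
      exact hrefl _ _ (key y hy)
    rwa [LinearMap.BilinForm.orthogonal_orthogonal hnd hrefl] at hx'
  · -- `p` normalizes `Q`
    intro hxp y hyQ z hz
    have h1 : killingForm k L ⁅y, x⁆ z = killingForm k L y ⁅x, z⁆ :=
      LieModule.traceForm_apply_lie_apply k L L y x z
    have h2 : ⁅x, z⁆ ∈ p := p.lie_mem hxp hz
    have h3 : killingForm k L y ⁅x, z⁆ = 0 := hyQ _ h2
    have h4 : (⁅x, y⁆ : L) = -⁅y, x⁆ := by rw [← lie_skew]
    rw [h4, map_neg, LinearMap.neg_apply, h1, h3, neg_zero]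
end

section
/- Let 𝔤 be a finite-dimensional Lie algebra over a field k whose solvable radical is trivial (rad(𝔤) = 0). Let 𝔮 ⊊ 𝔤 be a maximal proper Lie subalgebra and let 𝔲 be a nonzero ideal of 𝔮 all of whose elements are ad-nilpotent in 𝔤. Then 𝔮 = N_𝔤(𝔲). -/
/-- Let `𝔤` be a finite-dimensional Lie algebra over a field `k` with trivial
solvable radical.  Let `𝔮 ⊊ 𝔤` be a maximal proper Lie subalgebra and `𝔲` a nonzero ideal of
`𝔮` all of whose elements are ad-nilpotent in `𝔤`.  Then `𝔮 = N_𝔤(𝔲)`. -/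
theorem maximal_subalgebra_eq_normalizer_of_nil_ideal
    {k L : Type*} [Field k] [LieRing L] [LieAlgebra k L] [FiniteDimensional k L]
    (hrad : LieAlgebra.radical k L = ⊥)
    (q : LieSubalgebra k L)
    (hq_proper : q ≠ ⊤)
    (hq_max : ∀ r : LieSubalgebra k L, q ≤ r → r = q ∨ r = ⊤)
    (u : LieSubalgebra k L)
    (hu_ne : u ≠ ⊥)
    (hu_le : u ≤ q)
    (hu_ideal : ∀ x ∈ q, ∀ y ∈ u, ⁅x, y⁆ ∈ u)
    (hu_nil : ∀ x ∈ u, IsNilpotent (LieAlgebra.ad k L x)) :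
    q = u.normalizer := by
  have hqn : q ≤ u.normalizer := by
    intro x hx
    rw [LieSubalgebra.mem_normalizer_iff]
    exact fun y hy => hu_ideal x hx y hy
  rcases hq_max u.normalizer hqn with h | h
  · exact h.symm
  · -- normalizer is everything: u is an ideal of L
    exfalso
    have hmem : ∀ (x : L), ∀ y ∈ u, ⁅x, y⁆ ∈ u := by
      intro x y hy
      have hx : x ∈ u.normalizer := h ▸ LieSubalgebra.mem_top x
      exact (u.mem_normalizer_iff x).mp hx y hy
    let I : LieIdeal k L :=
      { u.toSubmodule with
        lie_mem := fun {x m} hm => hmem x m hm }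
    have hIu : ∀ x : L, x ∈ I ↔ x ∈ u := fun x => Iff.rfl
    -- I is nilpotent by Engel
    have hnil : LieRing.IsNilpotent I := by
      rw [LieAlgebra.isNilpotent_iff_forall (R := k)]
      intro x
      obtain ⟨n, hn⟩ := hu_nil (x : L) x.2
      refine ⟨n, ?_⟩
      ext y
      have key : ∀ m : ℕ, ∀ y : I, (((LieAlgebra.ad k I x) ^ m) y : L)
          = ((LieAlgebra.ad k L (x : L)) ^ m) (y : L) := by
        intro m
        induction m with
        | zero => intro y; simp
        | succ m ih =>
          intro y
          rw [pow_succ', pow_succ']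
          simp only [Module.End.mul_apply]
          rw [← ih]
          rfl
      have := key n y
      rw [hn] at this
      simpa using (Subtype.ext this : ((LieAlgebra.ad k I x) ^ n) y = 0)
    have hsolv : LieAlgebra.IsSolvable I := inferInstance
    have : I ≤ LieAlgebra.radical k L := (LieAlgebra.LieIdeal.solvable_iff_le_radical k L I).mp hsolv
    rw [hrad] at this
    apply hu_ne
    rw [LieSubalgebra.eq_bot_iff]
    intro x hx
    simpa using this hx
end

section
/- Let k be a field of characteristic 3 and let E_{ij} denote the matrix units of 𝔤𝔩₃(k). Set X := E₁₂ + E₂₃ and Y := E₂₁ + 2·E₃₂. Then: (i) ⁅X,Y⁆ = XY − YX equals the identity matrix; (ii) for all a, b ∈ k, (aX + bY)³ = 0; consequently the images of X and Y in the quotient Lie algebra 𝔭𝔤𝔩₃(k) := 𝔤𝔩₃(k)/(k·1) are linearly independent and span a two-dimensional abelian Lie subalgebra of 𝔭𝔤𝔩₃(k) all of whose elements are ad-nilpotent. -/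
set_option synthInstance.maxHeartbeats 400000
set_option maxHeartbeats 1000000


open Matrix

attribute [local instance 100] LieRing.ofAssociativeRing

/-- The central ideal `k·1` of scalar matrices in `𝔤𝔩₃(k)`. -/
def scalarLieIdeal (k : Type*) [Field k] :
    LieIdeal k (Matrix (Fin 3) (Fin 3) k) :=
  { Submodule.span k {(1 : Matrix (Fin 3) (Fin 3) k)} with
    lie_mem := by
      intro x m hm
      replace hm : m ∈ Submodule.span k {(1 : Matrix (Fin 3) (Fin 3) k)} := hm
      obtain ⟨c, rfl⟩ := Submodule.mem_span_singleton.mp hm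
      show ⁅x, c • (1 : Matrix (Fin 3) (Fin 3) k)⁆ ∈
        Submodule.span k {(1 : Matrix (Fin 3) (Fin 3) k)}
      have hz : ⁅x, c • (1 : Matrix (Fin 3) (Fin 3) k)⁆ = 0 := by
        simp [Ring.lie_def, mul_smul_comm, smul_mul_assoc]
      rw [hz]
      exact zero_mem _ }

private lemma aux_lie {k : Type*} [Field k] [CharP k 3] :
    ⁅(single 0 1 1 + single 1 2 1 : Matrix (Fin 3) (Fin 3) k),
      (single 1 0 1 + single 2 1 2 : Matrix (Fin 3) (Fin 3) k)⁆ = 1 := by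
  have h3 : (3:k) = 0 := by exact_mod_cast CharP.cast_eq_zero k 3
  rw [← Matrix.ext_iff]
  intro i j
  fin_cases i <;> fin_cases j <;>
    simp [Ring.lie_def, Matrix.mul_apply, Fin.sum_univ_three, Matrix.single, Matrix.one_apply,
      Matrix.sub_apply, Matrix.add_apply, Matrix.of_apply]
  any_goals norm_num
  all_goals linear_combination -h3

private lemma aux_cube {k : Type*} [Field k] [CharP k 3] (a b : k) :
    ((a • (single 0 1 1 + single 1 2 1) +
      b • (single 1 0 1 + single 2 1 2)) : Matrix (Fin 3) (Fin 3) k) ^ 3 = 0 := by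
  have h3 : (3:k) = 0 := by exact_mod_cast CharP.cast_eq_zero k 3
  have h6 : (6:k) = 0 := by linear_combination 2*h3
  rw [← Matrix.ext_iff]
  intro i j
  fin_cases i <;> fin_cases j <;>
    simp [pow_succ, Matrix.mul_apply, Fin.sum_univ_three, Matrix.single, Matrix.add_apply,
      Matrix.smul_apply, smul_eq_mul, Matrix.of_apply, Matrix.zero_apply]
  all_goals ring_nf
  all_goals simp [h3, h6]

/-- Over a field `k` of characteristic `3`, with `X := E₁₂ + E₂₃` and
`Y := E₂₁ + 2·E₃₂` in `𝔤𝔩₃(k)`: (i) `⁅X, Y⁆ = 1`; (ii) `(aX + bY)³ = 0` for all `a, b ∈ k`;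
consequently the images of `X` and `Y` in `𝔭𝔤𝔩₃(k) = 𝔤𝔩₃(k)/(k·1)` are linearly independent
and span a two-dimensional abelian Lie subalgebra of `𝔭𝔤𝔩₃(k)` all of whose elements are
ad-nilpotent. -/
theorem pgl3_char3_ad_nilpotent_abelian_subalgebra
    {k : Type*} [Field k] [CharP k 3] :
    letI X : Matrix (Fin 3) (Fin 3) k := single 0 1 1 + single 1 2 1
    letI Y : Matrix (Fin 3) (Fin 3) k := single 1 0 1 + single 2 1 2
    letI Xbar : Matrix (Fin 3) (Fin 3) k ⧸ scalarLieIdeal k :=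
      LieSubmodule.Quotient.mk (N := scalarLieIdeal k) X
    letI Ybar : Matrix (Fin 3) (Fin 3) k ⧸ scalarLieIdeal k :=
      LieSubmodule.Quotient.mk (N := scalarLieIdeal k) Y
    ⁅X, Y⁆ = (1 : Matrix (Fin 3) (Fin 3) k) ∧
    (∀ a b : k, (a • X + b • Y) ^ 3 = 0) ∧
    LinearIndependent k ![Xbar, Ybar] ∧
    Module.finrank k (Submodule.span k {Xbar, Ybar}) = 2 ∧
    (∀ x ∈ Submodule.span k {Xbar, Ybar}, ∀ y ∈ Submodule.span k {Xbar, Ybar},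
      ⁅x, y⁆ = 0) ∧
    (∀ x ∈ Submodule.span k {Xbar, Ybar},
      IsNilpotent (LieAlgebra.ad k (Matrix (Fin 3) (Fin 3) k ⧸ scalarLieIdeal k) x)) := by
  set X : Matrix (Fin 3) (Fin 3) k := single 0 1 1 + single 1 2 1 with hX
  set Y : Matrix (Fin 3) (Fin 3) k := single 1 0 1 + single 2 1 2 with hY
  set Xbar : Matrix (Fin 3) (Fin 3) k ⧸ scalarLieIdeal k :=
      LieSubmodule.Quotient.mk (N := scalarLieIdeal k) X with hXbar
  set Ybar : Matrix (Fin 3) (Fin 3) k ⧸ scalarLieIdeal k :=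
      LieSubmodule.Quotient.mk (N := scalarLieIdeal k) Y with hYbar
  -- mk of combos
  have hmk : ∀ s t : k, LieSubmodule.Quotient.mk (N := scalarLieIdeal k) (s • X + t • Y)
      = s • Xbar + t • Ybar := by
    intro s t
    rfl
  have hli : LinearIndependent k ![Xbar, Ybar] := by
    rw [LinearIndependent.pair_iff]
    intro s t hst
    rw [← hmk s t] at hst
    have hm : s • X + t • Y ∈ scalarLieIdeal k :=
      (LieSubmodule.Quotient.mk_eq_zero').mp hst
    obtain ⟨c, hc⟩ := Submodule.mem_span_singleton.mp hm
    constructor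
    · have h01 : (c • (1 : Matrix (Fin 3) (Fin 3) k)) 0 1 = (s • X + t • Y) 0 1 := by rw [hc]
      simpa [hX, hY, Matrix.single, Matrix.one_apply] using h01.symm
    · have h10 : (c • (1 : Matrix (Fin 3) (Fin 3) k)) 1 0 = (s • X + t • Y) 1 0 := by rw [hc]
      simpa [hX, hY, Matrix.single, Matrix.one_apply] using h10.symm
  have hlieXY : ⁅Xbar, Ybar⁆ = 0 := by
    rw [hXbar, hYbar, ← LieSubmodule.Quotient.mk_bracket]
    rw [LieSubmodule.Quotient.mk_eq_zero']
    rw [hX, hY, aux_lie]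
    exact Submodule.mem_span_singleton_self _
  refine ⟨aux_lie, fun a b => aux_cube a b, hli, ?_, ?_, ?_⟩
  · have hr : ({Xbar, Ybar} : Set (Matrix (Fin 3) (Fin 3) k ⧸ scalarLieIdeal k))
        = Set.range ![Xbar, Ybar] := by
      ext z
      simp [Fin.exists_fin_two, or_comm]
    rw [hr, finrank_span_eq_card hli]
    simp
  · intro x hx y hy
    obtain ⟨s, t, rfl⟩ := Submodule.mem_span_pair.mp hx
    obtain ⟨u, v, rfl⟩ := Submodule.mem_span_pair.mp hy
    have h2 : ⁅Ybar, Xbar⁆ = 0 := by rw [← lie_skew, hlieXY, neg_zero]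
    simp [lie_add, add_lie, lie_smul, smul_lie, hlieXY, h2]
  · intro x hx
    obtain ⟨s, t, rfl⟩ := Submodule.mem_span_pair.mp hx
    have hM : IsNilpotent (s • X + t • Y) := ⟨3, by rw [hX, hY]; exact aux_cube s t⟩
    obtain ⟨n, hn⟩ := LieAlgebra.ad_nilpotent_of_nilpotent (R := k) hM
    refine ⟨n, ?_⟩
    have key : ∀ (j : ℕ) (N : Matrix (Fin 3) (Fin 3) k),
        ((LieAlgebra.ad k (Matrix (Fin 3) (Fin 3) k ⧸ scalarLieIdeal k)
          (s • Xbar + t • Ybar)) ^ j) (LieSubmodule.Quotient.mk (N := scalarLieIdeal k) N)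
        = LieSubmodule.Quotient.mk (N := scalarLieIdeal k)
            (((LieAlgebra.ad k (Matrix (Fin 3) (Fin 3) k) (s • X + t • Y)) ^ j) N) := by
      intro j
      induction j with
      | zero => intro N; simp
      | succ j ih =>
        intro N
        rw [pow_succ', pow_succ', Module.End.mul_apply, Module.End.mul_apply, ih,
          ← hmk s t, LieAlgebra.ad_apply, LieAlgebra.ad_apply,
          LieSubmodule.Quotient.mk_bracket]
    ext z
    obtain ⟨N, rfl⟩ := Submodule.Quotient.mk_surjective _ z
    have := key n N
    rw [hn] at this
    simpa using this
end

section
/- Let 𝔤 be a finite-dimensional Lie algebra over a field k with Killing form κ, let 𝔥 ⊆ 𝔤 be a Lie subalgebra, and let 𝔫 be an ideal of the Lie algebra 𝔥 such that every element of 𝔫 is ad-nilpotent in 𝔤. Then κ(x,y) = 0 for all x ∈ 𝔫 and y ∈ 𝔥; equivalently, 𝔥 ⊆ 𝔫^⊥. -/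
/-- Let `𝔤` be a finite-dimensional Lie algebra over a field `k` with Killing
form `κ`, let `𝔥 ⊆ 𝔤` be a Lie subalgebra and `𝔫` an ideal of `𝔥` all of whose elements are
ad-nilpotent in `𝔤`.  Then `κ(x, y) = 0` for all `x ∈ 𝔫` and `y ∈ 𝔥`; that is, `𝔥 ⊆ 𝔫^⊥`. -/
theorem killingForm_eq_zero_of_mem_nil_ideal
    {k L : Type*} [Field k] [LieRing L] [LieAlgebra k L] [FiniteDimensional k L]
    (h : LieSubalgebra k L)
    (n : Submodule k L)
    (hn_le : (n : Set L) ⊆ (h : Set L))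
    (hn_ideal : ∀ x ∈ h, ∀ y ∈ n, ⁅x, y⁆ ∈ n)
    (hn_nil : ∀ x ∈ n, IsNilpotent (LieAlgebra.ad k L x)) :
    ∀ x ∈ n, ∀ y ∈ h, killingForm k L x y = 0 := by
  intro x hx y hy
  -- `n` is a Lie subalgebra of `L`.
  set N : LieSubalgebra k L :=
    { toSubmodule := n
      lie_mem' := fun {a b} ha hb => hn_ideal a (hn_le ha) b hb } with hN
  -- Engel: L is a nilpotent N-module.
  have hnil : LieModule.IsNilpotent N L := by
    rw [LieModule.isNilpotent_iff_forall' (R := k)]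
    rintro ⟨z, hz⟩
    exact hn_nil z hz
  obtain ⟨m, hm⟩ := (LieModule.isNilpotent_iff k N L).mp hnil
  set F : ℕ → LieSubmodule k N L := LieModule.lowerCentralSeries k N L with hF
  -- ad x sends F i into F (i+1)
  have hstep : ∀ i, ∀ v ∈ F i, ⁅x, v⁆ ∈ F (i + 1) := by
    intro i v hv
    rw [hF, ← LieSubmodule.mem_toSubmodule, LieModule.lowerCentralSeries_succ,
      LieSubmodule.lieIdeal_oper_eq_linear_span']
    exact Submodule.subset_span ⟨⟨x, hx⟩, trivial, v, hv, rfl⟩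
  -- ad y preserves each F i
  have hpres : ∀ i, ∀ v ∈ F i, ⁅y, v⁆ ∈ F i := by
    intro i
    induction i with
    | zero => intro v _; simp [hF]
    | succ i ih =>
        intro v hv
        rw [hF, ← LieSubmodule.mem_toSubmodule, LieModule.lowerCentralSeries_succ,
          LieSubmodule.lieIdeal_oper_eq_linear_span'] at hv
        rw [hF, ← LieSubmodule.mem_toSubmodule, LieModule.lowerCentralSeries_succ,
          LieSubmodule.lieIdeal_oper_eq_linear_span']
        induction hv using Submodule.span_induction with
        | mem w hw =>
            obtain ⟨⟨z, hz⟩, -, u, hu, rfl⟩ := hw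
            have hyz : ⁅y, z⁆ ∈ n := hn_ideal y hy z hz
            have h1 : ⁅(⁅y, z⁆ : L), u⁆ ∈ Submodule.span k
                {w | ∃ a ∈ (⊤ : LieIdeal k N), ∃ b ∈ F i, ⁅(a : L), b⁆ = w} :=
              Submodule.subset_span ⟨⟨⁅y, z⁆, hyz⟩, trivial, u, hu, rfl⟩
            have h2 : ⁅z, ⁅y, u⁆⁆ ∈ Submodule.span k
                {w | ∃ a ∈ (⊤ : LieIdeal k N), ∃ b ∈ F i, ⁅(a : L), b⁆ = w} :=
              Submodule.subset_span ⟨⟨z, hz⟩, trivial, ⁅y, u⁆, ih _ hu, rfl⟩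
            have heq : ⁅y, ⁅z, u⁆⁆ = ⁅(⁅y, z⁆ : L), u⁆ + ⁅z, ⁅y, u⁆⁆ := leibniz_lie y z u
            show ⁅y, ⁅z, u⁆⁆ ∈ _
            rw [heq]
            exact Submodule.add_mem _ h1 h2
        | zero => simp
        | add a b _ _ ha hb => rw [lie_add]; exact Submodule.add_mem _ ha hb
        | smul c a _ ha => rw [lie_smul]; exact Submodule.smul_mem _ c ha
  -- (ad x ∘ ad y) is nilpotent
  have aux : ∀ i, ∀ v : L, ((LieAlgebra.ad k L x ∘ₗ LieAlgebra.ad k L y) ^ i) v ∈ F i := by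
    intro i
    induction i with
    | zero => intro v; simp [hF]
    | succ i ih =>
        intro v
        rw [pow_succ', Module.End.mul_apply]
        have h1 := hpres i _ (ih v)
        have h2 := hstep i _ h1
        exact h2
  have key : IsNilpotent (LieAlgebra.ad k L x ∘ₗ LieAlgebra.ad k L y) := by
    refine ⟨m, ?_⟩
    ext v
    have := aux m v
    rw [hm] at this
    simpa using this
  rw [killingForm_apply_apply]
  have := LinearMap.isNilpotent_trace_of_isNilpotent key
  exact this.eq_zero
end
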